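/- arXiv:1609.07358 — 2 statements merged into one kernel-verified Lean document; each statement's English description precedes it below -/
import Mathlib

section
/- The FISTA iterates satisfy, for every k ≥ 0, (1/2)·‖x_k − x_*‖_v² ≤ (1/2)·‖x_0 − x_*‖_v². -/
open scoped RealInnerProductSpace

noncomputable def Dv {n : ℕ} (v : Fin n → ℝ) (w : EuclideanSpace ℝ (Fin n)) : ℝ :=
  ∑ i, v i * (w i) ^ 2

lemma Dv_nonneg {n : ℕ} {v : Fin n → ℝ} (hv : ∀ i, 0 < v i) (w : EuclideanSpace ℝ (Fin n)) :
    0 ≤ Dv v w :=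
  Finset.sum_nonneg fun i _ => mul_nonneg (hv i).le (sq_nonneg _)

lemma Dv_neg {n : ℕ} (v : Fin n → ℝ) (w : EuclideanSpace ℝ (Fin n)) : Dv v (-w) = Dv v w := by
  unfold Dv; apply Finset.sum_congr rfl; intro i _
  simp [PiLp.neg_apply]

lemma Dv_smul {n : ℕ} (v : Fin n → ℝ) (t : ℝ) (w : EuclideanSpace ℝ (Fin n)) :
    Dv v (t • w) = t ^ 2 * Dv v w := by
  unfold Dv; rw [Finset.mul_sum]; apply Finset.sum_congr rfl; intro i _
  simp [PiLp.smul_apply, smul_eq_mul]; ring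

lemma Dv_combo {n : ℕ} (v : Fin n → ℝ) (t : ℝ) (a b : EuclideanSpace ℝ (Fin n)) :
    Dv v ((1 - t) • a + t • b)
      = (1 - t) * Dv v a + t * Dv v b - t * (1 - t) * Dv v (a - b) := by
  unfold Dv
  rw [Finset.mul_sum, Finset.mul_sum, Finset.mul_sum, ← Finset.sum_add_distrib,
    ← Finset.sum_sub_distrib]
  apply Finset.sum_congr rfl; intro i _
  simp [PiLp.add_apply, PiLp.sub_apply, PiLp.smul_apply, smul_eq_mul]; ring

lemma grad_ineq {n : ℕ} {f : EuclideanSpace ℝ (Fin n) → ℝ}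
    (hf : ConvexOn ℝ Set.univ f) {g : EuclideanSpace ℝ (Fin n) → EuclideanSpace ℝ (Fin n)}
    (hg : ∀ x, HasGradientAt f (g x) x) (x u : EuclideanSpace ℝ (Fin n)) :
    f x + ⟪g x, u - x⟫ ≤ f u := by
  set φ : ℝ → ℝ := fun t => f (x + t • (u - x)) with hφ
  have hline : ∀ t : ℝ, HasDerivAt (fun s : ℝ => x + s • (u - x)) (u - x) t := by
    intro t
    simpa using ((hasDerivAt_id t).smul_const (u - x)).const_add x
  have hd : HasDerivAt φ ⟪g x, u - x⟫ 0 := by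
    have h1 := (hg x).hasFDerivAt
    have h2 : HasFDerivAt (fun s : ℝ => x + s • (u - x))
        ((1 : ℝ →L[ℝ] ℝ).smulRight (u - x)) 0 := (hline 0).hasFDerivAt
    have h1' : HasFDerivAt f ((InnerProductSpace.toDual ℝ (EuclideanSpace ℝ (Fin n))) (g x))
        (x + (0:ℝ) • (u - x)) := by simpa using h1
    have h3 := h1'.comp (0 : ℝ) h2
    have h4 : HasDerivAt φ
        (((InnerProductSpace.toDual ℝ (EuclideanSpace ℝ (Fin n))) (g x)) (u - x)) 0 := by
      have := h1'.comp_hasDerivAt (0 : ℝ) (hline 0)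
      exact this
    simpa [InnerProductSpace.toDual_apply_apply] using h4
  have hslope : Filter.Tendsto (fun t : ℝ => (φ t - φ 0) / t) (nhdsWithin 0 (Set.Ioi 0))
      (nhds ⟪g x, u - x⟫) := by
    have := hasDerivAt_iff_tendsto_slope.mp hd
    refine (this.mono_left (nhdsWithin_mono _ ?_)).congr ?_
    · intro t ht; exact ne_of_gt ht
    · intro t; rw [slope_def_field]; ring_nf
  have hφ0 : φ 0 = f x := by simp [hφ]
  have hbound : ∀ t ∈ Set.Ioo (0:ℝ) 1, (φ t - φ 0) / t ≤ f u - f x := by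
    intro t ht
    have hcomb : x + t • (u - x) = (1 - t) • x + t • u := by
      rw [smul_sub, sub_smul, one_smul]; abel
    have hc := hf.2 (Set.mem_univ x) (Set.mem_univ u)
      (sub_nonneg.mpr ht.2.le) ht.1.le (by ring : (1 - t) + t = 1)
    rw [← hcomb] at hc
    rw [hφ0, div_le_iff₀ ht.1]
    have : φ t ≤ (1 - t) * f x + t * f u := by simpa [hφ, smul_eq_mul] using hc
    nlinarith [ht.1]
  have key : ⟪g x, u - x⟫ ≤ f u - f x := by
    refine le_of_tendsto hslope ?_
    filter_upwards [Ioo_mem_nhdsGT_of_mem (by norm_num : (0:ℝ) ∈ Set.Ico (0:ℝ) 1)] with t ht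
    exact hbound t ht
  linarith

lemma strong_min {n : ℕ} {v : Fin n → ℝ} (hv : ∀ i, 0 < v i)
    {ψ : EuclideanSpace ℝ (Fin n) → ℝ} (hψ : ConvexOn ℝ Set.univ ψ)
    (gy yk xp : EuclideanSpace ℝ (Fin n))
    (hmin : ∀ u, ⟪gy, xp - yk⟫ + (1/2) * Dv v (xp - yk) + ψ xp
      ≤ ⟪gy, u - yk⟫ + (1/2) * Dv v (u - yk) + ψ u)
    (u : EuclideanSpace ℝ (Fin n)) :
    ⟪gy, xp - yk⟫ + (1/2) * Dv v (xp - yk) + ψ xp + (1/2) * Dv v (u - xp)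
      ≤ ⟪gy, u - yk⟫ + (1/2) * Dv v (u - yk) + ψ u := by
  set Qxp : ℝ := ⟪gy, xp - yk⟫ + (1/2) * Dv v (xp - yk) + ψ xp with hQxp
  set Qu : ℝ := ⟪gy, u - yk⟫ + (1/2) * Dv v (u - yk) + ψ u with hQu
  set Dd : ℝ := Dv v (u - xp) with hDd
  clear_value Qxp Qu Dd
  have hDd0 : 0 ≤ Dd := hDd ▸ Dv_nonneg hv _
  have hminu : Qxp ≤ Qu := by rw [hQu]; exact hmin u
  have hC0 : 0 ≤ Qu - Qxp := by linarith
  have step : ∀ t : ℝ, t ∈ Set.Ioo (0:ℝ) 1 → (1 - t)/2 * Dd ≤ Qu - Qxp := by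
    intro t ht
    set m : EuclideanSpace ℝ (Fin n) := (1 - t) • xp + t • u with hm
    have hmdec : m - yk = (1 - t) • (xp - yk) + t • (u - yk) := by
      rw [hm]; module
    have hinner : ⟪gy, m - yk⟫ = (1 - t) * ⟪gy, xp - yk⟫ + t * ⟪gy, u - yk⟫ := by
      rw [hmdec, inner_add_right, real_inner_smul_right, real_inner_smul_right]
    have hDm : Dv v (m - yk)
        = (1 - t) * Dv v (xp - yk) + t * Dv v (u - yk) - t * (1 - t) * Dd := by
      rw [hmdec, Dv_combo]
      have h9 : xp - yk - (u - yk) = -(u - xp) := by abel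
      rw [h9, Dv_neg, ← hDd]
    have hψm : ψ m ≤ (1 - t) * ψ xp + t * ψ u := by
      have := hψ.2 (Set.mem_univ xp) (Set.mem_univ u)
        (sub_nonneg.mpr ht.2.le) ht.1.le (by ring : (1 - t) + t = 1)
      simpa [hm] using this
    have hQm := hmin m
    rw [hinner, hDm] at hQm
    rw [hQu, hQxp]
    refine le_of_mul_le_mul_left ?_ ht.1
    rw [hQxp] at hQm
    nlinarith [hQm, hψm, ht.1.le, ht.2.le]
  rcases eq_or_lt_of_le hDd0 with h | h
  · rw [← h]; linarith
  · by_contra hcon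
    push_neg at hcon
    have hC : Qu - Qxp < Dd / 2 := by linarith
    set t : ℝ := (Dd / 2 - (Qu - Qxp)) / Dd with htdef
    have ht1 : 0 < t := div_pos (by linarith) h
    have ht2 : t < 1 := by
      rw [htdef, div_lt_one h]; linarith
    have htD : t * Dd = Dd / 2 - (Qu - Qxp) := div_mul_cancel₀ _ h.ne'
    have := step t ⟨ht1, ht2⟩
    nlinarith
theorem stmt_5 {n : ℕ} (hn : 1 ≤ n)
    (v : Fin n → ℝ) (hv : ∀ i, 0 < v i)
    (f ψ F : EuclideanSpace ℝ (Fin n) → ℝ)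
    (g : EuclideanSpace ℝ (Fin n) → EuclideanSpace ℝ (Fin n))
    (hfconv : ConvexOn ℝ Set.univ f)
    (hgrad : ∀ x, HasGradientAt f (g x) x)
    (hdesc : ∀ x h : EuclideanSpace ℝ (Fin n),
      f (x + h) ≤ f x + ⟪g x, h⟫ + (1 / 2) * ∑ i, v i * (h i) ^ 2)
    (hψconv : ConvexOn ℝ Set.univ ψ)
    (hF : ∀ x, F x = f x + ψ x)
    (xstar : EuclideanSpace ℝ (Fin n)) (hxstar : ∀ x, F xstar ≤ F x)
    (x y z : ℕ → EuclideanSpace ℝ (Fin n)) (θ : ℕ → ℝ)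
    (hθinit : θ 0 = 1) (hzinit : z 0 = x 0)
    (hy : ∀ k, y k = (1 - θ k) • x k + θ k • z k)
    (hxmin : ∀ k, ∀ u : EuclideanSpace ℝ (Fin n),
      ⟪g (y k), x (k + 1) - y k⟫ + (1 / 2) * (∑ i, v i * ((x (k + 1) - y k) i) ^ 2)
          + ψ (x (k + 1))
        ≤ ⟪g (y k), u - y k⟫ + (1 / 2) * (∑ i, v i * ((u - y k) i) ^ 2) + ψ u)
    (hz : ∀ k, z (k + 1) = z k + (θ k)⁻¹ • (x (k + 1) - y k))
    (hθrec : ∀ k : ℕ, θ (k + 1) = (Real.sqrt ((θ k) ^ 4 + 4 * (θ k) ^ 2) - (θ k) ^ 2) / 2)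
     :
    ∀ k : ℕ,
      (1 / 2) * ∑ i, v i * ((x k - xstar) i) ^ 2
        ≤ (1 / 2) * ∑ i, v i * ((x 0 - xstar) i) ^ 2 := by
  -- θ facts
  have hθpos : ∀ k, 0 < θ k := by
    intro k
    induction k with
    | zero => rw [hθinit]; norm_num
    | succ k ih =>
      rw [hθrec k]
      have hlt : (θ k) ^ 2 < Real.sqrt ((θ k) ^ 4 + 4 * (θ k) ^ 2) := by
        have h1 : (θ k) ^ 2 = Real.sqrt (((θ k) ^ 2) ^ 2) := (Real.sqrt_sq (sq_nonneg _)).symm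
        rw [h1]
        apply Real.sqrt_lt_sqrt (sq_nonneg _)
        nlinarith [pow_pos ih 2]
      linarith
  have hθsq : ∀ k, (θ (k + 1)) ^ 2 = (θ k) ^ 2 * (1 - θ (k + 1)) := by
    intro k
    have hs : Real.sqrt ((θ k) ^ 4 + 4 * (θ k) ^ 2) ^ 2 = (θ k) ^ 4 + 4 * (θ k) ^ 2 :=
      Real.sq_sqrt (by positivity)
    rw [hθrec k]
    linear_combination hs / 4
  have hθlt1 : ∀ k, θ (k + 1) < 1 := by
    intro k
    have hp : 0 < (θ k) ^ 2 * (1 - θ (k + 1)) := by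
      rw [← hθsq k]; exact pow_pos (hθpos (k + 1)) 2
    nlinarith [pow_pos (hθpos k) 2]
  have hθle1 : ∀ k, θ k ≤ 1 := by
    intro k
    cases k with
    | zero => rw [hθinit]
    | succ k => exact (hθlt1 k).le
  -- x recursion
  have hxrec : ∀ k, x (k + 1) = (1 - θ k) • x k + θ k • z (k + 1) := by
    intro k
    have h1 : (1 - θ k) • x k + θ k • z (k + 1) = y k + (x (k + 1) - y k) := by
      rw [hz k, hy k, smul_add, smul_smul, mul_inv_cancel₀ (hθpos k).ne', one_smul]
      abel
    rw [h1]; abel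
  -- F convex
  have hFconv : ConvexOn ℝ Set.univ F := by
    have hFe : F = fun w => f w + ψ w := funext hF
    rw [hFe]; exact hfconv.add hψconv
  -- key one-step inequality
  have hkey : ∀ k (u : EuclideanSpace ℝ (Fin n)),
      F (x (k + 1)) ≤ F u + (1 / 2) * Dv v (u - y k) - (1 / 2) * Dv v (u - x (k + 1)) := by
    intro k u
    have h1 := hdesc (y k) (x (k + 1) - y k)
    have e1 : y k + (x (k + 1) - y k) = x (k + 1) := by abel
    rw [e1] at h1
    have h1' : f (x (k + 1)) ≤ f (y k) + ⟪g (y k), x (k + 1) - y k⟫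
        + (1 / 2) * Dv v (x (k + 1) - y k) := h1
    have hmin' : ∀ w, ⟪g (y k), x (k + 1) - y k⟫ + (1/2) * Dv v (x (k + 1) - y k) + ψ (x (k + 1))
        ≤ ⟪g (y k), w - y k⟫ + (1/2) * Dv v (w - y k) + ψ w := fun w => hxmin k w
    have h2 := strong_min hv hψconv (g (y k)) (y k) (x (k + 1)) hmin' u
    have h3 := grad_ineq hfconv hgrad (y k) u
    have hF1 := hF (x (k + 1))
    have hF2 := hF u
    linarith
  -- Lyapunov (multiplied form)
  have hms : ∀ k,
      (F (x (k + 1)) - F xstar) + (θ k) ^ 2 * ((1 / 2) * Dv v (z (k + 1) - xstar))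
        ≤ (1 - θ k) * (F (x k) - F xstar)
          + (θ k) ^ 2 * ((1 / 2) * Dv v (z k - xstar)) := by
    intro k
    have hkeyk := hkey k ((1 - θ k) • x k + θ k • xstar)
    have hu1 : ((1 - θ k) • x k + θ k • xstar) - y k = θ k • (xstar - z k) := by
      rw [hy k]; module
    have hu2 : ((1 - θ k) • x k + θ k • xstar) - x (k + 1) = θ k • (xstar - z (k + 1)) := by
      rw [hxrec k]; module
    have e1 : xstar - z k = -(z k - xstar) := by abel
    have e2 : xstar - z (k + 1) = -(z (k + 1) - xstar) := by abel
    rw [hu1, hu2, e1, e2, Dv_smul, Dv_smul, Dv_neg, Dv_neg] at hkeyk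
    have hFu : F ((1 - θ k) • x k + θ k • xstar) ≤ (1 - θ k) * F (x k) + θ k * F xstar :=
      hFconv.2 (Set.mem_univ _) (Set.mem_univ _) (by linarith [hθle1 k]) (hθpos k).le
        (by ring)
    nlinarith [hkeyk, hFu]
  -- telescoped claim
  have claim : ∀ k,
      ((1 - θ k) / (θ k) ^ 2) * (F (x k) - F xstar) + (1 / 2) * Dv v (z k - xstar)
        ≤ (1 / 2) * Dv v (x 0 - xstar) := by
    intro k
    induction k with
    | zero => rw [hθinit, hzinit]; norm_num
    | succ k ih =>
      have hθ2 : (0 : ℝ) < (θ k) ^ 2 := pow_pos (hθpos k) 2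
      have hr : (1 - θ (k + 1)) / (θ (k + 1)) ^ 2 = 1 / (θ k) ^ 2 := by
        rw [hθsq k]
        rw [mul_comm, div_mul_eq_div_div]
        rw [div_self (by linarith [hθlt1 k] : 1 - θ (k+1) ≠ 0)]
      have h3 := mul_le_mul_of_nonneg_left (hms k) (le_of_lt (one_div_pos.mpr hθ2))
      rw [mul_add, mul_add] at h3
      have e1 : (1 / (θ k) ^ 2) * ((θ k) ^ 2 * ((1 / 2) * Dv v (z (k + 1) - xstar)))
          = (1 / 2) * Dv v (z (k + 1) - xstar) := by rw [one_div, inv_mul_cancel_left₀ hθ2.ne']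
      have e2 : (1 / (θ k) ^ 2) * ((θ k) ^ 2 * ((1 / 2) * Dv v (z k - xstar)))
          = (1 / 2) * Dv v (z k - xstar) := by rw [one_div, inv_mul_cancel_left₀ hθ2.ne']
      have e3 : (1 / (θ k) ^ 2) * ((1 - θ k) * (F (x k) - F xstar))
          = ((1 - θ k) / (θ k) ^ 2) * (F (x k) - F xstar) := by ring
      rw [e1, e2, e3] at h3
      rw [hr]
      linarith
  -- bound on z
  have hzbound : ∀ k, (1 / 2) * Dv v (z k - xstar) ≤ (1 / 2) * Dv v (x 0 - xstar) := by
    intro k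
    have h1 := claim k
    have h2 : 0 ≤ ((1 - θ k) / (θ k) ^ 2) * (F (x k) - F xstar) :=
      mul_nonneg (div_nonneg (by linarith [hθle1 k]) (sq_nonneg _))
        (by linarith [hxstar (x k)])
    linarith
  -- final induction
  intro k
  show (1 / 2) * Dv v (x k - xstar) ≤ (1 / 2) * Dv v (x 0 - xstar)
  induction k with
  | zero => exact le_rfl
  | succ k ih =>
    have hxk : x (k + 1) - xstar
        = (1 - θ k) • (x k - xstar) + θ k • (z (k + 1) - xstar) := by
      rw [hxrec k]; module
    rw [hxk, Dv_combo]
    have hA := ih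
    have hB := hzbound (k + 1)
    have hC := Dv_nonneg hv ((x k - xstar) - (z (k + 1) - xstar))
    have h1 := hθpos k
    have h2 := hθle1 k
    nlinarith [mul_nonneg (sub_nonneg.mpr h2) (sub_nonneg.mpr
        (by linarith : Dv v (x k - xstar) ≤ Dv v (x 0 - xstar))),
      mul_nonneg h1.le (sub_nonneg.mpr
        (by linarith : Dv v (z (k + 1) - xstar) ≤ Dv v (x 0 - xstar))),
      mul_nonneg (mul_nonneg h1.le (sub_nonneg.mpr h2)) hC]
end

section
/- For the FISTA iterates, let k ≥ 1, let σ ∈ [0,1], and set x̄_k = (1−σ)·x_k + σ·z_k. Then (1/2)·‖x̄_k − x_*‖_v² ≤ (1/2)·max(σ, 1 − σ·μ/θ_{k−1}²)·‖x_0 − x_*‖_v². -/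
open scoped RealInnerProductSpace

lemma fista_nv_nonneg {n : ℕ} {v : Fin n → ℝ} (hv : ∀ i, 0 ≤ v i)
    (a : EuclideanSpace ℝ (Fin n)) : 0 ≤ ∑ i, v i * (a i)^2 :=
  Finset.sum_nonneg fun i _ => mul_nonneg (hv i) (sq_nonneg _)

lemma fista_nv_combo {n : ℕ} (v : Fin n → ℝ) (t : ℝ) (a b : EuclideanSpace ℝ (Fin n)) :
    ∑ i, v i * (((1 - t) • a + t • b) i)^2
      = (1-t) * ∑ i, v i * (a i)^2 + t * ∑ i, v i * (b i)^2
        - (t*(1-t)) * ∑ i, v i * ((b-a) i)^2 := by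
  rw [Finset.mul_sum, Finset.mul_sum, Finset.mul_sum, ← Finset.sum_add_distrib,
    ← Finset.sum_sub_distrib]
  refine Finset.sum_congr rfl fun i _ => ?_
  simp only [PiLp.add_apply, PiLp.smul_apply, PiLp.sub_apply, smul_eq_mul]
  ring

lemma fista_nv_smul {n : ℕ} (v : Fin n → ℝ) (c : ℝ) (a : EuclideanSpace ℝ (Fin n)) :
    ∑ i, v i * ((c • a) i)^2 = c^2 * ∑ i, v i * (a i)^2 := by
  rw [Finset.mul_sum]
  refine Finset.sum_congr rfl fun i _ => ?_
  simp only [PiLp.smul_apply, smul_eq_mul]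
  ring

lemma fista_nv_symm {n : ℕ} (v : Fin n → ℝ) (a b : EuclideanSpace ℝ (Fin n)) :
    ∑ i, v i * ((a - b) i)^2 = ∑ i, v i * ((b - a) i)^2 := by
  refine Finset.sum_congr rfl fun i _ => ?_
  simp only [PiLp.sub_apply]
  ring

lemma fista_tangent {E : Type*} [NormedAddCommGroup E] [InnerProductSpace ℝ E] [CompleteSpace E]
    {f : E → ℝ} {G y : E} (hconv : ConvexOn ℝ Set.univ f) (hg : HasGradientAt f G y)
    (u : E) : f y + ⟪G, u - y⟫ ≤ f u := by
  set d := u - y with hd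
  have hline : HasDerivAt (fun t : ℝ => y + t • d) d 0 := by
    simpa using ((hasDerivAt_id (0:ℝ)).smul_const d).const_add y
  have hcomp : HasDerivAt (fun t : ℝ => f (y + t • d)) ⟪G, d⟫ 0 := by
    have hy0 : y = y + (0:ℝ) • d := by simp
    have hfd : HasFDerivAt f ((InnerProductSpace.toDual ℝ E) G) (y + (0:ℝ) • d) := by
      rw [← hy0]; exact hg.hasFDerivAt
    have := hfd.comp_hasDerivAt 0 hline
    exact this.congr_deriv (by simp)
  have hslope : Filter.Tendsto (slope (fun t : ℝ => f (y + t • d)) 0) (nhdsWithin 0 {(0:ℝ)}ᶜ)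
      (nhds ⟪G, d⟫) := hasDerivAt_iff_tendsto_slope.1 hcomp
  have hmono : nhdsWithin (0:ℝ) (Set.Ioi 0) ≤ nhdsWithin 0 {(0:ℝ)}ᶜ :=
    nhdsWithin_mono 0 (fun t ht => ne_of_gt ht)
  have hslope' : Filter.Tendsto (slope (fun t : ℝ => f (y + t • d)) 0)
      (nhdsWithin (0:ℝ) (Set.Ioi 0)) (nhds ⟪G, d⟫) := hslope.mono_left hmono
  have hbound : ∀ᶠ t in nhdsWithin (0:ℝ) (Set.Ioi 0),
      slope (fun t : ℝ => f (y + t • d)) 0 t ≤ f u - f y := by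
    filter_upwards [Ico_mem_nhdsGT_of_mem (by norm_num : (0:ℝ) ∈ Set.Ico 0 1),
      self_mem_nhdsWithin] with t ht ht0
    have ht0' : (0:ℝ) < t := ht0
    have hcvx := hconv.2 (Set.mem_univ y) (Set.mem_univ u)
      (by linarith [ht.2] : (0:ℝ) ≤ 1 - t) (le_of_lt ht0') (by ring)
    have hpt : y + t • d = (1 - t) • y + t • u := by rw [hd]; module
    rw [slope_def_field]
    simp only [zero_smul, add_zero, sub_zero]
    rw [div_le_iff₀ ht0', hpt]
    simp only [smul_eq_mul] at hcvx
    nlinarith [hcvx]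
  have hle := le_of_tendsto hslope' hbound
  linarith [hle]

set_option maxHeartbeats 4000000 in
theorem stmt_9 {n : ℕ} (hn : 1 ≤ n)
    (v : Fin n → ℝ) (hv : ∀ i, 0 < v i)
    (f ψ F : EuclideanSpace ℝ (Fin n) → ℝ)
    (g : EuclideanSpace ℝ (Fin n) → EuclideanSpace ℝ (Fin n))
    (hfconv : ConvexOn ℝ Set.univ f)
    (hgrad : ∀ x, HasGradientAt f (g x) x)
    (hdesc : ∀ x h : EuclideanSpace ℝ (Fin n),
      f (x + h) ≤ f x + ⟪g x, h⟫ + (1 / 2) * ∑ i, v i * (h i) ^ 2)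
    (hψconv : ConvexOn ℝ Set.univ ψ)
    (hF : ∀ x, F x = f x + ψ x)
    (xstar : EuclideanSpace ℝ (Fin n)) (hxstar : ∀ x, F xstar ≤ F x)
    (x y z : ℕ → EuclideanSpace ℝ (Fin n)) (θ : ℕ → ℝ)
    (hθinit : θ 0 = 1) (hzinit : z 0 = x 0)
    (hy : ∀ k, y k = (1 - θ k) • x k + θ k • z k)
    (hxmin : ∀ k, ∀ u : EuclideanSpace ℝ (Fin n),
      ⟪g (y k), x (k + 1) - y k⟫ + (1 / 2) * (∑ i, v i * ((x (k + 1) - y k) i) ^ 2)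
          + ψ (x (k + 1))
        ≤ ⟪g (y k), u - y k⟫ + (1 / 2) * (∑ i, v i * ((u - y k) i) ^ 2) + ψ u)
    (hz : ∀ k, z (k + 1) = z k + (θ k)⁻¹ • (x (k + 1) - y k))
    (hθrec : ∀ k : ℕ, θ (k + 1) = (Real.sqrt ((θ k) ^ 4 + 4 * (θ k) ^ 2) - (θ k) ^ 2) / 2)
    (μ : ℝ) (hμ : 0 < μ)
    (hsc : ∀ u : EuclideanSpace ℝ (Fin n),
      F xstar + (μ / 2) * ∑ i, v i * ((u - xstar) i) ^ 2 ≤ F u)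
    (σ : ℝ) (hσ0 : 0 ≤ σ) (hσ1 : σ ≤ 1) :
    ∀ k : ℕ, 1 ≤ k →
      (1 / 2) * ∑ i, v i * (((1 - σ) • x k + σ • z k - xstar) i) ^ 2
        ≤ (1 / 2) * max σ (1 - σ * μ / (θ (k - 1)) ^ 2)
            * ∑ i, v i * ((x 0 - xstar) i) ^ 2 := by
  classical
  have hv' : ∀ i, 0 ≤ v i := fun i => (hv i).le
  set Nv : EuclideanSpace ℝ (Fin n) → ℝ := fun a => ∑ i, v i * (a i)^2 with hNvdef
  -- θ facts
  have θfacts : ∀ k, 0 < θ k ∧ θ k ≤ 1 := by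
    intro k; induction k with
    | zero => rw [hθinit]; exact ⟨one_pos, le_refl 1⟩
    | succ k ih =>
      obtain ⟨h0, _⟩ := ih
      have hs0 : 0 < (θ k)^2 := by positivity
      have harg : (0:ℝ) ≤ (θ k)^4 + 4*(θ k)^2 := by positivity
      have hrsq : Real.sqrt ((θ k)^4 + 4*(θ k)^2) ^ 2 = (θ k)^4 + 4*(θ k)^2 :=
        Real.sq_sqrt harg
      have hrnn := Real.sqrt_nonneg ((θ k)^4 + 4*(θ k)^2)
      have hrgt : (θ k)^2 < Real.sqrt ((θ k)^4 + 4*(θ k)^2) := by nlinarith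
      have hrle : Real.sqrt ((θ k)^4 + 4*(θ k)^2) ≤ (θ k)^2 + 2 := by nlinarith
      rw [hθrec k]
      constructor
      · linarith
      · linarith
  have θpos : ∀ k, 0 < θ k := fun k => (θfacts k).1
  have θle1 : ∀ k, θ k ≤ 1 := fun k => (θfacts k).2
  have θid : ∀ k, (θ (k+1))^2 = (θ k)^2 * (1 - θ (k+1)) := by
    intro k
    have harg : (0:ℝ) ≤ (θ k)^4 + 4*(θ k)^2 := by positivity
    have hrsq : Real.sqrt ((θ k)^4 + 4*(θ k)^2) ^ 2 = (θ k)^4 + 4*(θ k)^2 :=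
      Real.sq_sqrt harg
    rw [hθrec k]
    nlinarith [hrsq]
  -- key per-step inequality
  have key : ∀ k u, F (x (k+1)) + (1/2) * Nv (u - x (k+1))
      ≤ F u + (1/2) * Nv (u - y k) := by
    intro k u
    set Y := y k with hY
    set m := x (k+1) with hm
    set G := g Y with hG
    -- strong minimality
    have hstrong : ⟪G, m - Y⟫ + (1/2) * Nv (m - Y) + ψ m + (1/2) * Nv (u - m)
        ≤ ⟪G, u - Y⟫ + (1/2) * Nv (u - Y) + ψ u := by
      have hNd0 : 0 ≤ Nv (u - m) := fista_nv_nonneg hv' _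
      rw [← sub_nonneg]
      by_contra hcon
      push_neg at hcon
      rw [sub_neg] at hcon
      set Im := ⟪G, m - Y⟫ with hIm
      set Iu := ⟪G, u - Y⟫ with hIu
      set Nm := Nv (m - Y) with hNm
      set Nu := Nv (u - Y) with hNu
      set Nd := Nv (u - m) with hNd
      set pm := ψ m with hpm
      set pu := ψ u with hpu
      set ε : ℝ := (Im + (1/2) * Nm + pm + (1/2) * Nd) - (Iu + (1/2) * Nu + pu) with hεdef
      have hε : 0 < ε := by rw [hεdef]; linarith
      set t : ℝ := min (1/2) (ε / (Nd + 1)) with ht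
      have ht0 : 0 < t := lt_min (by norm_num) (by positivity)
      have ht1 : t < 1 := lt_of_le_of_lt (min_le_left _ _) (by norm_num)
      set w := (1-t) • m + t • u with hw
      have hA : Im + (1/2) * Nm + pm
          ≤ ⟪G, w - Y⟫ + (1/2) * Nv (w - Y) + ψ w := hxmin k w
      have hinner : ⟪G, w - Y⟫ = (1-t)*Im + t*Iu := by
        have hwy : w - Y = (1-t) • (m - Y) + t • (u - Y) := by rw [hw]; module
        rw [hIm, hIu, hwy, inner_add_right, real_inner_smul_right, real_inner_smul_right]
      have hnv : Nv (w - Y) = (1-t)*Nm + t*Nu - (t*(1-t))*Nd := by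
        have hwy : w - Y = (1-t) • (m - Y) + t • (u - Y) := by rw [hw]; module
        have h2 : (u - Y) - (m - Y) = u - m := by abel
        rw [hNm, hNu, hNd, hNvdef]
        simp only
        rw [hwy, fista_nv_combo, h2]
      have hψw : ψ w ≤ (1-t) * pm + t * pu := by
        have := hψconv.2 (Set.mem_univ m) (Set.mem_univ u)
          (by linarith : (0:ℝ) ≤ 1 - t) (le_of_lt ht0) (by ring)
        rw [hpm, hpu]
        simpa [smul_eq_mul, hw] using this
      have htle : t ≤ ε / (Nd + 1) := min_le_right _ _
      have h1 : t * (Nd + 1) ≤ ε := by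
        rw [← le_div_iff₀ (by positivity : (0:ℝ) < Nd + 1)]
        exact htle
      clear_value Im Iu Nm Nu Nd pm pu ε t
      have htNd : t * Nd ≤ ε := by nlinarith [h1, ht0]
      rw [hinner, hnv] at hA
      have h7 : 0 ≤ t * ((Iu + (1/2)*Nu + pu) - (Im + (1/2)*Nm + pm) - (1-t)/2 * Nd) := by
        nlinarith [hA, hψw]
      have h8 : 0 ≤ (Iu + (1/2)*Nu + pu) - (Im + (1/2)*Nm + pm) - (1-t)/2 * Nd :=
        nonneg_of_mul_nonneg_right h7 ht0
      linarith [h8, htNd, hε]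
    have hdesc' : f m ≤ f Y + ⟪G, m - Y⟫ + (1/2) * Nv (m - Y) := by
      have h := hdesc Y (m - Y)
      have e : Y + (m - Y) = m := by abel
      rw [e] at h
      exact h
    have htan : f Y + ⟪G, u - Y⟫ ≤ f u := fista_tangent hfconv (hgrad Y) u
    rw [hF m, hF u]
    linarith
  -- step inequality
  have step : ∀ k, F (x (k+1)) - F xstar + (θ k)^2/2 * Nv (z (k+1) - xstar)
      ≤ (1 - θ k) * (F (x k) - F xstar) + (θ k)^2/2 * Nv (z k - xstar) := by
    intro k
    have hT0 := θpos k
    have hT1 := θle1 k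
    set u := (1 - θ k) • x k + θ k • xstar with hu
    have hk := key k u
    have h1 : u - y k = θ k • (xstar - z k) := by rw [hu, hy k]; module
    have h2 : θ k • (z (k+1) - z k) = x (k+1) - y k := by
      rw [hz k]
      have : z k + (θ k)⁻¹ • (x (k+1) - y k) - z k = (θ k)⁻¹ • (x (k+1) - y k) := by abel
      rw [this, smul_smul, mul_inv_cancel₀ (ne_of_gt hT0), one_smul]
    have h3 : u - x (k+1) = θ k • (xstar - z (k+1)) := by
      have e1 : u - x (k+1) = (u - y k) - (x (k+1) - y k) := by abel
      rw [e1, h1, ← h2]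
      module
    have hnv1 : Nv (u - y k) = (θ k)^2 * Nv (xstar - z k) := by
      rw [h1]; exact fista_nv_smul v (θ k) _
    have hnv2 : Nv (u - x (k+1)) = (θ k)^2 * Nv (xstar - z (k+1)) := by
      rw [h3]; exact fista_nv_smul v (θ k) _
    have hFu : F u ≤ (1 - θ k) * F (x k) + θ k * F xstar := by
      have hFc : ConvexOn ℝ Set.univ F := by
        have : F = fun w => f w + ψ w := funext hF
        rw [this]; exact hfconv.add hψconv
      have := hFc.2 (Set.mem_univ (x k)) (Set.mem_univ xstar)
        (by linarith : (0:ℝ) ≤ 1 - θ k) hT0.le (by ring)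
      simpa [smul_eq_mul, hu] using this
    have hs1 : Nv (xstar - z k) = Nv (z k - xstar) := fista_nv_symm v _ _
    have hs2 : Nv (xstar - z (k+1)) = Nv (z (k+1) - xstar) := fista_nv_symm v _ _
    rw [hnv1, hnv2, hs1, hs2] at hk
    nlinarith [hk, hFu]

  -- Lyapunov
  have lyap : ∀ k, F (x (k+1)) - F xstar
      ≤ (θ k)^2 * ((1/2) * Nv (x 0 - xstar) - (1/2) * Nv (z (k+1) - xstar)) := by
    intro k
    induction k with
    | zero =>
      have h := step 0
      rw [hθinit, hzinit] at h
      rw [hθinit]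
      nlinarith [h]
    | succ k ih =>
      have hs := step (k+1)
      have hid := θid k
      have h1θ : 0 ≤ 1 - θ (k+1) := by linarith [θle1 (k+1)]
      have ih' := mul_le_mul_of_nonneg_left ih h1θ
      have heq : (1 - θ (k+1)) * ((θ k)^2 * ((1/2) * Nv (x 0 - xstar)
          - (1/2) * Nv (z (k+1) - xstar)))
          = (θ (k+1))^2 * ((1/2) * Nv (x 0 - xstar) - (1/2) * Nv (z (k+1) - xstar)) := by
        rw [hid]; ring
      rw [heq] at ih'
      nlinarith [hs, ih']
  have Fge : ∀ w, 0 ≤ F w - F xstar := fun w => by linarith [hxstar w]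
  -- z bound
  have zbound : ∀ k, Nv (z k - xstar) ≤ Nv (x 0 - xstar) := by
    intro k
    cases k with
    | zero => rw [hzinit]
    | succ k =>
      have h1 := lyap k
      have h2 := Fge (x (k+1))
      have hθ2 : 0 < (θ k)^2 := pow_pos (θpos k) 2
      have h3 : 0 ≤ (θ k)^2 * ((1/2) * Nv (x 0 - xstar) - (1/2) * Nv (z (k+1) - xstar)) := by
        linarith
      have h4 : 0 ≤ (1/2) * Nv (x 0 - xstar) - (1/2) * Nv (z (k+1) - xstar) :=
        nonneg_of_mul_nonneg_right h3 hθ2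
      linarith
  -- x bound
  have xbound : ∀ k, Nv (x k - xstar) ≤ Nv (x 0 - xstar) := by
    intro k
    induction k with
    | zero => exact le_refl _
    | succ k ih =>
      have hk := key k xstar
      have h1 : Nv (xstar - x (k+1)) ≤ Nv (xstar - y k) := by
        have := hxstar (x (k+1))
        linarith
      have h2 : y k - xstar = (1 - θ k) • (x k - xstar) + θ k • (z k - xstar) := by
        rw [hy k]; module
      have h3 : Nv (y k - xstar) ≤ (1 - θ k) * Nv (x k - xstar) + θ k * Nv (z k - xstar) := by
        rw [hNvdef]; simp only
        rw [h2, fista_nv_combo]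
        have hnn := fista_nv_nonneg hv' ((z k - xstar) - (x k - xstar))
        have h0 : 0 ≤ θ k * (1 - θ k) := mul_nonneg (θpos k).le (by linarith [θle1 k])
        nlinarith [mul_nonneg h0 hnn]
      have hs1 : Nv (xstar - x (k+1)) = Nv (x (k+1) - xstar) := fista_nv_symm v _ _
      have hs2 : Nv (xstar - y k) = Nv (y k - xstar) := fista_nv_symm v _ _
      rw [hs1, hs2] at h1
      have hz' := zbound k
      have e1 : (1 - θ k) * Nv (x k - xstar) ≤ (1 - θ k) * Nv (x 0 - xstar) :=
        mul_le_mul_of_nonneg_left ih (by linarith [θle1 k])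
      have e2 : θ k * Nv (z k - xstar) ≤ θ k * Nv (x 0 - xstar) :=
        mul_le_mul_of_nonneg_left hz' (θpos k).le
      linarith [h1, h3, e1, e2]
  -- final
  intro k hk
  obtain ⟨m, rfl⟩ : ∃ m, k = m + 1 := ⟨k - 1, (Nat.succ_pred_eq_of_pos hk).symm⟩
  simp only [Nat.add_sub_cancel]
  have ht0 : (0:ℝ) < (θ m)^2 := pow_pos (θpos m) 2
  have lm := lyap m
  have hsc' := hsc (x (m+1))
  have hxb := xbound (m+1)
  have hzb0 : (0:ℝ) ≤ Nv (z (m+1) - xstar) := fista_nv_nonneg hv' _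
  have hcb0 : (0:ℝ) ≤ Nv (x (m+1) - xstar) := fista_nv_nonneg hv' _
  have hN00 : (0:ℝ) ≤ Nv (x 0 - xstar) := fista_nv_nonneg hv' _
  have hcombo : Nv ((1-σ) • x (m+1) + σ • z (m+1) - xstar)
      ≤ (1-σ) * Nv (x (m+1) - xstar) + σ * Nv (z (m+1) - xstar) := by
    have h2 : (1-σ) • x (m+1) + σ • z (m+1) - xstar
        = (1-σ) • (x (m+1) - xstar) + σ • (z (m+1) - xstar) := by module
    rw [hNvdef]; simp only
    rw [h2, fista_nv_combo]
    have hnn := fista_nv_nonneg hv' ((z (m+1) - xstar) - (x (m+1) - xstar))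
    have h0 : 0 ≤ σ * (1 - σ) := mul_nonneg hσ0 (by linarith)
    nlinarith [mul_nonneg h0 hnn]
  show (1/2) * Nv ((1-σ) • x (m+1) + σ • z (m+1) - xstar)
      ≤ (1/2) * max σ (1 - σ * μ / (θ m)^2) * Nv (x 0 - xstar)
  set N0 := Nv (x 0 - xstar) with hN0
  set c := Nv (x (m+1) - xstar) with hc
  set b := Nv (z (m+1) - xstar) with hb
  set a := F (x (m+1)) - F xstar with ha
  set M := max σ (1 - σ * μ / (θ m)^2) with hM
  have hMσ : σ ≤ M := le_max_left _ _
  have hM2 : 1 - σ * μ / (θ m)^2 ≤ M := le_max_right _ _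
  -- facts
  have ha0 : 0 ≤ a := Fge (x (m+1))
  have hlm : a ≤ (θ m)^2 * ((1/2)*N0 - (1/2)*b) := lm
  have hμc : μ * c ≤ 2 * a := by
    have : (μ/2) * c ≤ a := by rw [ha, hc]; linarith [hsc']
    linarith
  have hdiv : μ * c / (θ m)^2 ≤ N0 - b := by
    rw [div_le_iff₀ ht0]
    nlinarith [hlm, hμc]
  have hkey2 : (1-σ)*c + σ*b ≤ σ*N0 + (1 - σ - σ*μ/(θ m)^2)*c := by
    have h1 : σ * b ≤ σ * (N0 - μ*c/(θ m)^2) :=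
      mul_le_mul_of_nonneg_left (by linarith) hσ0
    have heq : σ * (N0 - μ*c/(θ m)^2) + (1-σ)*c
        = σ*N0 + (1 - σ - σ*μ/(θ m)^2)*c := by ring
    linarith [h1, heq]
  have hfinal : (1-σ)*c + σ*b ≤ M * N0 := by
    rcases le_or_gt (1 - σ - σ*μ/(θ m)^2) 0 with hcase | hcase
    · have : (1 - σ - σ*μ/(θ m)^2)*c ≤ 0 := mul_nonpos_of_nonpos_of_nonneg hcase hcb0
      have : σ*N0 ≤ M*N0 := mul_le_mul_of_nonneg_right hMσ hN00
      linarith [hkey2]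
    · have h1 : (1 - σ - σ*μ/(θ m)^2)*c ≤ (1 - σ - σ*μ/(θ m)^2)*N0 :=
        mul_le_mul_of_nonneg_left hxb hcase.le
      have heq : σ*N0 + (1 - σ - σ*μ/(θ m)^2)*N0 = (1 - σ*μ/(θ m)^2)*N0 := by ring
      have h2 : (1 - σ*μ/(θ m)^2)*N0 ≤ M*N0 := mul_le_mul_of_nonneg_right hM2 hN00
      linarith [hkey2, h1]
  linarith [hcombo, hfinal]
end
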